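/- Let N be even and U ∈ U(N) an antisymmetric unitary matrix (U = −U^T). Then there exists X ∈ U(N) such that U = X J X^T, where J is the block-diagonal matrix with N/2 blocks equal to [[0,1],[-1,0]]. -/

import Mathlib

open Matrix

/-- The block-diagonal matrix `J = blockdiag(J₂, …, J₂)` with `J₂ = [[0,1],[-1,0]]`,
viewed as an `N × N` complex matrix (for `N` even there are `N/2` blocks). -/
def blockJ (N : ℕ) : Matrix (Fin N) (Fin N) ℂ :=
  Matrix.of fun i j : Fin N =>
    if (i : ℕ) % 2 = 0 ∧ (j : ℕ) = (i : ℕ) + 1 then (1 : ℂ)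
    else if (i : ℕ) % 2 = 1 ∧ (i : ℕ) = (j : ℕ) + 1 then -1 else 0

open Matrix

namespace Stmt14

variable {N : ℕ}

/-- Standard hermitian inner product on `Fin N → ℂ`. -/
noncomputable def ip (x y : Fin N → ℂ) : ℂ := star x ⬝ᵥ y

lemma ip_apply (x y : Fin N → ℂ) : ip x y = ∑ i, star (x i) * y i := rfl

lemma star_ip (x y : Fin N → ℂ) : star (ip x y) = ip y x := by
  simp [ip_apply, star_sum, mul_comm]

lemma ip_neg_left (x y : Fin N → ℂ) : ip (-x) y = -ip x y := by
  simp [ip, neg_dotProduct]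

lemma ip_neg_right (x y : Fin N → ℂ) : ip x (-y) = -ip x y := by
  simp [ip, dotProduct_neg]

lemma ip_smul_left (r : ℂ) (x y : Fin N → ℂ) : ip (r • x) y = star r * ip x y := by
  simp [ip, smul_dotProduct, star_smul, smul_eq_mul]

lemma ip_smul_right (r : ℂ) (x y : Fin N → ℂ) : ip x (r • y) = r * ip x y := by
  simp [ip, dotProduct_smul, smul_eq_mul]

/-- The antiunitary map `v ↦ U (conj v)`. -/
noncomputable def Tm (U : Matrix (Fin N) (Fin N) ℂ) (v : Fin N → ℂ) : Fin N → ℂ := U *ᵥ (star v)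

lemma Tm_neg (U : Matrix (Fin N) (Fin N) ℂ) (v : Fin N → ℂ) : Tm U (-v) = -Tm U v := by
  simp [Tm, Matrix.mulVec_neg]

section props
variable {U : Matrix (Fin N) (Fin N) ℂ} (hU : U ∈ Matrix.unitaryGroup (Fin N) ℂ)
  (hanti : U = -Uᵀ)

include hU hanti in
lemma Tm_Tm (v : Fin N → ℂ) : Tm U (Tm U v) = -v := by
  have hstar : star (U *ᵥ star v) = (U.map (starRingEnd ℂ)) *ᵥ v := by
    funext i
    simp [Matrix.mulVec, dotProduct, Matrix.map_apply, star_sum, mul_comm]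
  have hmap : U * U.map (starRingEnd ℂ) = -1 := by
    have h2 : U * star U = 1 := hU.2
    have hT : Uᵀ = -U := by
      have := congrArg Matrix.transpose hanti
      simpa using this
    have hsU : star U = -(U.map (starRingEnd ℂ)) := by
      have h : star U = Uᵀ.map (starRingEnd ℂ) := rfl
      rw [h, hT]
      ext i j; simp [Matrix.map_apply]
    rw [hsU, Matrix.mul_neg, neg_eq_iff_eq_neg] at h2
    exact h2
  show U *ᵥ star (U *ᵥ star v) = -v
  rw [hstar, Matrix.mulVec_mulVec, hmap]
  simp [Matrix.neg_mulVec]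

include hU in
lemma ip_Tm_Tm (x y : Fin N → ℂ) : ip (Tm U x) (Tm U y) = ip y x := by
  have h1 : star U * U = 1 := hU.1
  show star (U *ᵥ star x) ⬝ᵥ (U *ᵥ star y) = star y ⬝ᵥ x
  rw [Matrix.star_mulVec, star_star, Matrix.dotProduct_mulVec, Matrix.vecMul_vecMul,
    show Uᴴ * U = 1 from h1, Matrix.vecMul_one, dotProduct_comm]

include hU hanti in
lemma ip_Tm_swap (x y : Fin N → ℂ) : ip x (Tm U y) = -ip y (Tm U x) := by
  have := ip_Tm_Tm hU (Tm U x) y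
  rw [Tm_Tm hU hanti, ip_neg_left] at this
  linear_combination -this

include hU hanti in
lemma ip_self_Tm (x : Fin N → ℂ) : ip x (Tm U x) = 0 := by
  have := ip_Tm_swap hU hanti x x
  linear_combination this / 2

end props

lemma exists_unit_orthogonal {k : ℕ} (hk : k < N) (c : Fin k → Fin N → ℂ) :
    ∃ e : Fin N → ℂ, ip e e = 1 ∧ ∀ a, ip (c a) e = 0 := by
  set M : Matrix (Fin k) (Fin N) ℂ := Matrix.of (fun a i => star (c a i)) with hM
  have hninj : ¬ Function.Injective M.mulVecLin := by
    intro h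
    have := LinearMap.finrank_le_finrank_of_injective h
    simp [Module.finrank_fintype_fun_eq_card] at this
    omega
  rw [← LinearMap.ker_eq_bot] at hninj
  obtain ⟨v, hvker, hvne⟩ := Submodule.exists_mem_ne_zero_of_ne_bot hninj
  have hv : M *ᵥ v = 0 := hvker
  have horth : ∀ a, ip (c a) v = 0 := by
    intro a
    have := congrFun hv a
    simpa [ip_apply, Matrix.mulVec, dotProduct, hM] using this
  set s : ℝ := ∑ i, Complex.normSq (v i) with hs
  have hspos : 0 < s := by
    obtain ⟨i, hi⟩ : ∃ i, v i ≠ 0 := by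
      by_contra h; push_neg at h; exact hvne (funext h)
    exact Finset.sum_pos' (fun j _ => Complex.normSq_nonneg _)
      ⟨i, Finset.mem_univ i, Complex.normSq_pos.mpr hi⟩
  set r : ℝ := Real.sqrt s with hr
  have hrpos : 0 < r := Real.sqrt_pos.mpr hspos
  have hrr : (r : ℂ) * (r : ℂ) = (s : ℂ) := by
    rw [← Complex.ofReal_mul, Real.mul_self_sqrt hspos.le]
  have hipv : ip v v = (s : ℂ) := by
    rw [ip_apply, hs]
    push_cast
    refine Finset.sum_congr rfl fun i _ => ?_
    rw [Complex.normSq_eq_conj_mul_self]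
    rfl
  refine ⟨((r : ℂ))⁻¹ • v, ?_, ?_⟩
  · rw [ip_smul_left, ip_smul_right, hipv]
    have hstar : star ((r : ℂ))⁻¹ = ((r : ℂ))⁻¹ := by
      simp [star_inv₀, Complex.conj_ofReal]
    rw [hstar]
    have hrne : (r : ℂ) ≠ 0 := by exact_mod_cast hrpos.ne'
    field_simp [← hrr]
    rw [← hrr]; ring
  · intro a
    rw [ip_smul_right, horth a, mul_zero]

end Stmt14

namespace Stmt14

variable {N : ℕ} {U : Matrix (Fin N) (Fin N) ℂ}

lemma exists_family (hU : U ∈ Matrix.unitaryGroup (Fin N) ℂ) (hanti : U = -Uᵀ) :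
    ∀ k : ℕ, 2*k ≤ N → ∃ c : Fin (2*k) → Fin N → ℂ,
      (∀ a b, ip (c a) (c b) = if a = b then 1 else 0) ∧
      (∀ a b : Fin (2*k), (a:ℕ) % 2 = 0 → (b:ℕ) = (a:ℕ) + 1 → c b = -Tm U (c a)) := by
  intro k
  induction k with
  | zero =>
    intro _
    exact ⟨fun a => a.elim0, fun a => a.elim0, fun a => a.elim0⟩
  | succ k ih =>
    intro hk1
    have hk : 2*k < N := by omega
    obtain ⟨c, hortho, hpair⟩ := ih (by omega)
    obtain ⟨e, he1, he0⟩ := exists_unit_orthogonal hk c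
    set f : Fin N → ℂ := -Tm U e with hf
    have he0' : ∀ a, ip e (c a) = 0 := by
      intro a; rw [← star_ip, he0 a, star_zero]
    -- T maps old vectors into the span of old vectors:
    have hTc : ∀ a : Fin (2*k), ∃ b : Fin (2*k), Tm U (c a) = c b ∨ Tm U (c a) = -c b := by
      intro a
      rcases Nat.even_or_odd (a : ℕ) with hae | hao
      · have hae' : (a:ℕ) % 2 = 0 := Nat.even_iff.mp hae
        have hlt : (a:ℕ) + 1 < 2*k := by
          have := a.isLt; omega
        refine ⟨⟨(a:ℕ)+1, hlt⟩, Or.inr ?_⟩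
        have := hpair a ⟨(a:ℕ)+1, hlt⟩ hae' rfl
        rw [this, neg_neg]
      · have hao' : (a:ℕ) % 2 = 1 := Nat.odd_iff.mp hao
        have hge : 1 ≤ (a:ℕ) := by omega
        have hlt : (a:ℕ) - 1 < 2*k := by have := a.isLt; omega
        refine ⟨⟨(a:ℕ)-1, hlt⟩, Or.inl ?_⟩
        have := hpair ⟨(a:ℕ)-1, hlt⟩ a (by simp only [Fin.val_mk]; omega)
          (by simp only [Fin.val_mk]; omega)
        rw [this, Tm_neg, Tm_Tm hU hanti, neg_neg]
    have hf0 : ∀ a, ip (c a) f = 0 := by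
      intro a
      rw [hf, ip_neg_right, ip_Tm_swap hU hanti (c a) e, neg_neg]
      obtain ⟨b, hb | hb⟩ := hTc a
      · rw [hb, he0' b]
      · rw [hb, ip_neg_right, he0' b, neg_zero]
    have hf0' : ∀ a, ip f (c a) = 0 := by
      intro a; rw [← star_ip, hf0 a, star_zero]
    have hef : ip e f = 0 := by
      rw [hf, ip_neg_right, ip_self_Tm hU hanti, neg_zero]
    have hfe : ip f e = 0 := by rw [← star_ip, hef, star_zero]
    have hff : ip f f = 1 := by
      rw [hf, ip_neg_left, ip_neg_right, neg_neg, ip_Tm_Tm hU, he1]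
    -- the extended family
    set c' : Fin (2*(k+1)) → Fin N → ℂ := fun a =>
      if h : (a:ℕ) < 2*k then c ⟨a, h⟩ else if (a:ℕ) = 2*k then e else f with hc'
    have hc1 : ∀ (a : Fin (2*(k+1))) (h : (a:ℕ) < 2*k), c' a = c ⟨a, h⟩ := by
      intro a h; simp only [hc', dif_pos h]
    have hc2 : ∀ (a : Fin (2*(k+1))), (a:ℕ) = 2*k → c' a = e := by
      intro a h; simp only [hc', dif_neg (by omega : ¬ (a:ℕ) < 2*k), if_pos h]
    have hc3 : ∀ (a : Fin (2*(k+1))), (a:ℕ) = 2*k+1 → c' a = f := by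
      intro a h
      simp only [hc', dif_neg (by omega : ¬ (a:ℕ) < 2*k), if_neg (by omega : ¬ (a:ℕ) = 2*k)]
    have tri : ∀ a : Fin (2*(k+1)), (a:ℕ) < 2*k ∨ (a:ℕ) = 2*k ∨ (a:ℕ) = 2*k+1 := by
      intro a; have := a.isLt; omega
    refine ⟨c', ?_, ?_⟩
    · intro a b
      rcases tri a with ha | ha | ha <;> rcases tri b with hb | hb | hb
      · rw [hc1 a ha, hc1 b hb, hortho]
        have : (⟨(a:ℕ), ha⟩ : Fin (2*k)) = ⟨(b:ℕ), hb⟩ ↔ a = b := by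
          constructor <;> (intro h; exact Fin.ext (by simpa [Fin.ext_iff] using h))
        by_cases h : a = b
        · rw [if_pos h, if_pos (this.mpr h)]
        · rw [if_neg h, if_neg (fun hh => h (this.mp hh))]
      · rw [hc1 a ha, hc2 b hb, he0, if_neg (by intro h; rw [h] at ha; omega)]
      · rw [hc1 a ha, hc3 b hb, hf0, if_neg (by intro h; rw [h] at ha; omega)]
      · rw [hc2 a ha, hc1 b hb, he0', if_neg (by intro h; rw [h] at ha; omega)]
      · rw [hc2 a ha, hc2 b hb, he1, if_pos (Fin.ext (by omega))]
      · rw [hc2 a ha, hc3 b hb, hef, if_neg (by intro h; rw [h] at ha; omega)]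
      · rw [hc3 a ha, hc1 b hb, hf0', if_neg (by intro h; rw [h] at ha; omega)]
      · rw [hc3 a ha, hc2 b hb, hfe, if_neg (by intro h; rw [h] at ha; omega)]
      · rw [hc3 a ha, hc3 b hb, hff, if_pos (Fin.ext (by omega))]
    · intro a b ha0 hb
      rcases tri a with ha | ha | ha
      · have hblt : (b:ℕ) < 2*k := by omega
        rw [hc1 a ha, hc1 b hblt]
        exact hpair ⟨a, ha⟩ ⟨b, hblt⟩ ha0 (by simp [hb])
      · rw [hc2 a ha, hc3 b (by omega), hf]
      · omega

end Stmt14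

open Stmt14

/-- For `N` even, every antisymmetric unitary matrix `U ∈ U(N)` can be
written as `U = X J Xᵀ` with `X ∈ U(N)`, where `J` is the block-diagonal matrix with
`N/2` blocks `[[0,1],[-1,0]]`. -/
theorem stmt_14 (N : ℕ) (hN : Even N) (U : Matrix (Fin N) (Fin N) ℂ)
    (hU : U ∈ Matrix.unitaryGroup (Fin N) ℂ) (hanti : U = -Uᵀ) :
    ∃ X ∈ Matrix.unitaryGroup (Fin N) ℂ, U = X * blockJ N * Xᵀ := by
  have hNe : N % 2 = 0 := Nat.even_iff.mp hN
  have hN2 : N = 2 * (N / 2) := by omega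
  obtain ⟨c0, hortho0, hpair0⟩ := exists_family hU hanti (N/2) (by omega)
  set c : Fin N → Fin N → ℂ := fun a => c0 (Fin.cast hN2 a) with hc
  have hortho : ∀ a b : Fin N, ip (c a) (c b) = if a = b then 1 else 0 := by
    intro a b
    rw [hc, hortho0]
    by_cases h : a = b
    · rw [if_pos h, if_pos (by rw [h])]
    · rw [if_neg h, if_neg (fun hh => h (by
        apply Fin.ext
        have : ((Fin.cast hN2 a : Fin (2*(N/2))) : ℕ) = ((Fin.cast hN2 b : Fin (2*(N/2))) : ℕ) := by rw [hh]
        simpa using this))]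
  have hpair : ∀ a b : Fin N, (a:ℕ) % 2 = 0 → (b:ℕ) = (a:ℕ) + 1 → c b = -Tm U (c a) := by
    intro a b ha hb
    exact hpair0 (Fin.cast hN2 a) (Fin.cast hN2 b) (by simpa using ha) (by simpa using hb)
  -- the involution swapping pair partners
  have hσaux : ∀ a : Fin N, (a:ℕ) % 2 = 0 → (a:ℕ)+1 < N := by
    intro a h; have := a.isLt; omega
  have hσaux2 : ∀ a : Fin N, (a:ℕ) - 1 < N := by
    intro a; have := a.isLt; omega
  set σ : Fin N → Fin N := fun a =>
    if h : (a:ℕ) % 2 = 0 then ⟨(a:ℕ)+1, hσaux a h⟩ else ⟨(a:ℕ)-1, hσaux2 a⟩ with hσ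
  have hσe : ∀ a : Fin N, (a:ℕ) % 2 = 0 → (σ a : ℕ) = (a:ℕ)+1 := by
    intro a h; rw [hσ]; simp only [dif_pos h]
  have hσo : ∀ a : Fin N, (a:ℕ) % 2 = 1 → (σ a : ℕ) = (a:ℕ)-1 := by
    intro a h; rw [hσ]; simp only [dif_neg (by omega : ¬ (a:ℕ) % 2 = 0)]
  have hσσ : Function.Involutive σ := by
    intro a
    apply Fin.ext
    rcases Nat.even_or_odd (a:ℕ) with h | h
    · have h' := Nat.even_iff.mp h
      rw [hσo _ (by rw [hσe a h']; omega), hσe a h']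
      omega
    · have h' := Nat.odd_iff.mp h
      have h1 : 1 ≤ (a:ℕ) := by omega
      rw [hσe _ (by rw [hσo a h']; omega), hσo a h']
      omega
  -- action of T on the family
  have hTe : ∀ a : Fin N, (a:ℕ) % 2 = 0 → Tm U (c a) = -c (σ a) := by
    intro a h
    rw [hpair (a := a) (b := σ a) h (hσe a h), neg_neg]
  have hTo : ∀ a : Fin N, (a:ℕ) % 2 = 1 → Tm U (c a) = c (σ a) := by
    intro a h
    have hσa : ((σ a : Fin N) : ℕ) % 2 = 0 := by rw [hσo a h]; omega
    have := hpair (σ a) a hσa (by rw [hσo a h]; omega)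
    rw [this, Tm_neg, Tm_Tm hU hanti, neg_neg]
  -- the unitary X
  set X : Matrix (Fin N) (Fin N) ℂ := Matrix.of (fun i a => c a i) with hX
  have hXs : star X * X = 1 := by
    ext a b
    rw [Matrix.mul_apply, Matrix.one_apply]
    calc ∑ i, (star X) a i * X i b = ∑ i, star (c a i) * c b i := by
          refine Finset.sum_congr rfl fun i _ => ?_
          rw [Matrix.star_apply, hX]; rfl
      _ = ip (c a) (c b) := (ip_apply _ _).symm
      _ = if a = b then 1 else 0 := hortho a b
  have hXmem : X ∈ Matrix.unitaryGroup (Fin N) ℂ := Matrix.mem_unitaryGroup_iff'.mpr hXs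
  have hXXs : X * star X = 1 := mul_eq_one_comm.mp hXs
  have hrows : ∀ m j : Fin N, (∑ a, star (c a m) * c a j) = if (m:Fin N) = j then 1 else 0 := by
    intro m j
    have h1 := congrFun (congrFun hXXs m) j
    rw [Matrix.mul_apply, Matrix.one_apply] at h1
    have h2 : ∑ a, X m a * (star X) a j = ∑ a, c a m * star (c a j) := by
      refine Finset.sum_congr rfl fun a _ => ?_
      rw [Matrix.star_apply, hX]; rfl
    rw [h2] at h1
    calc ∑ a, star (c a m) * c a j = star (∑ a, c a m * star (c a j)) := by
          rw [star_sum]; exact Finset.sum_congr rfl fun a _ => by simp [mul_comm]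
      _ = _ := by rw [h1]; split <;> simp
  -- entrywise formula for U
  have hUij : ∀ i j : Fin N, U i j = ∑ a, (Tm U (c a)) i * c a j := by
    intro i j
    calc U i j = ∑ m, U i m * ∑ a, star (c a m) * c a j := by
          simp only [hrows]
          simp
      _ = ∑ m, ∑ a, U i m * (star (c a m) * c a j) := by
          refine Finset.sum_congr rfl fun m _ => Finset.mul_sum _ _ _
      _ = ∑ a, ∑ m, U i m * (star (c a m) * c a j) := Finset.sum_comm
      _ = ∑ a, (Tm U (c a)) i * c a j := by
          refine Finset.sum_congr rfl fun a _ => ?_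
          show _ = (U *ᵥ star (c a)) i * c a j
          rw [Matrix.mulVec, dotProduct, Finset.sum_mul]
          exact Finset.sum_congr rfl fun m _ => by rw [Pi.star_apply]; ring
  -- row sums of blockJ
  have hrowJ : ∀ a j : Fin N, (∑ b, blockJ N a b * c b j)
      = if (a:ℕ) % 2 = 0 then c (σ a) j else -(c (σ a) j) := by
    intro a j
    rcases Nat.even_or_odd (a:ℕ) with h | h
    · have h' := Nat.even_iff.mp h
      rw [if_pos h']
      rw [Finset.sum_eq_single (σ a)]
      · rw [show blockJ N a (σ a) = 1 by
          simp only [blockJ, Matrix.of_apply]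
          rw [if_pos ⟨h', (hσe a h').symm ▸ rfl⟩], one_mul]
      · intro b _ hb
        have hbv : (b:ℕ) ≠ (a:ℕ)+1 := by
          intro hh; exact hb (Fin.ext (by rw [hh, hσe a h']))
        rw [show blockJ N a b = 0 by
          simp only [blockJ, Matrix.of_apply]
          rw [if_neg (by tauto), if_neg (by omega)], zero_mul]
      · intro h; exact absurd (Finset.mem_univ _) h
    · have h' := Nat.odd_iff.mp h
      rw [if_neg (by omega)]
      rw [Finset.sum_eq_single (σ a)]
      · rw [show blockJ N a (σ a) = -1 by
          simp only [blockJ, Matrix.of_apply]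
          rw [if_neg (by omega), if_pos ⟨h', by rw [hσo a h']; omega⟩]]
        ring
      · intro b _ hb
        have hbv : (a:ℕ) ≠ (b:ℕ)+1 := by
          intro hh
          exact hb (Fin.ext (by rw [hσo a h']; omega))
        rw [show blockJ N a b = 0 by
          simp only [blockJ, Matrix.of_apply]
          rw [if_neg (by omega), if_neg (by tauto)], zero_mul]
      · intro h; exact absurd (Finset.mem_univ _) h
  refine ⟨X, hXmem, ?_⟩
  ext i j
  rw [Matrix.mul_assoc, Matrix.mul_apply, hUij i j]
  have hXJ : ∀ a, X i a * (blockJ N * Xᵀ) a j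
      = c a i * (if (a:ℕ) % 2 = 0 then c (σ a) j else -(c (σ a) j)) := by
    intro a
    rw [Matrix.mul_apply, show (∑ b, blockJ N a b * Xᵀ b j) = ∑ b, blockJ N a b * c b j from
      Finset.sum_congr rfl fun b _ => by rw [Matrix.transpose_apply, hX]; rfl, hrowJ a j]
    rfl
  rw [show (∑ a, X i a * (blockJ N * Xᵀ) a j)
      = ∑ a, c a i * (if (a:ℕ) % 2 = 0 then c (σ a) j else -(c (σ a) j)) from
    Finset.sum_congr rfl fun a _ => hXJ a]
  rw [← Equiv.sum_comp (hσσ.toPerm σ) (fun a => (Tm U (c a)) i * c a j)]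
  refine Finset.sum_congr rfl fun a _ => ?_
  have hσa : (hσσ.toPerm σ) a = σ a := rfl
  rw [hσa]
  rcases Nat.even_or_odd (a:ℕ) with h | h
  · have h' := Nat.even_iff.mp h
    have hσodd : ((σ a : Fin N) : ℕ) % 2 = 1 := by rw [hσe a h']; omega
    rw [hTo (σ a) hσodd, hσσ a, if_pos h']
  · have h' := Nat.odd_iff.mp h
    have hσev : ((σ a : Fin N) : ℕ) % 2 = 0 := by rw [hσo a h']; omega
    rw [hTe (σ a) hσev, hσσ a, if_neg (by omega)]
    show (-(c a)) i * c (σ a) j = _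
    rw [Pi.neg_apply]; ring
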